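/- The group G is metabelian: its commutator subgroup ⁅G,G⁆ is abelian; moreover ⁅G,G⁆ is isomorphic (as a group) to ℤ × ℤ. -/

import Mathlib

open Zsqrtd
open scoped commutatorElement

noncomputable def rho : ℤ√2 →+* ℝ := Zsqrtd.toReal (by norm_num)

theorem rho_inj : Function.Injective rho := by
  apply Zsqrtd.toReal_injective
  intro n hn
  have h1 : -2 ≤ n := by nlinarith
  have h2 : n ≤ 2 := by nlinarith
  interval_cases n <;> omega

def pii : ℤ√2 →+* ZMod 2 where
  toFun x := (x.re : ZMod 2)
  map_one' := by simp
  map_mul' x y := by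
    show (((x*y).re : ℤ) : ZMod 2) = _
    rw [Zsqrtd.re_mul]; push_cast
    have : (2 : ZMod 2) = 0 := by decide
    rw [this]; ring
  map_zero' := by simp
  map_add' x y := by
    show (((x+y).re : ℤ) : ZMod 2) = _
    rw [Zsqrtd.re_add]; push_cast; ring

theorem pii_unit (u : (ℤ√2)ˣ) : pii (u : ℤ√2) = 1 := by
  have h1 : pii (u : ℤ√2) * pii ((u⁻¹ : (ℤ√2)ˣ) : ℤ√2) = 1 := by
    rw [← map_mul]; simp
  revert h1
  generalize pii (u : ℤ√2) = a
  generalize pii ((u⁻¹ : (ℤ√2)ˣ) : ℤ√2) = b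
  revert a b; decide

abbrev MM := Matrix (Fin 2) (Fin 2) ℝ

theorem runit (u : (ℤ√2)ˣ) : rho (u : ℤ√2) * rho ((u⁻¹:(ℤ√2)ˣ) : ℤ√2) = 1 := by
  rw [← map_mul]; simp

theorem fin2_eq {a b c d e f g' h' : ℝ} (h1 : a=e) (h2 : b=f) (h3 : c=g') (h4 : d=h') :
    !![a,b;c,d] = !![e,f;g',h'] := by rw [h1,h2,h3,h4]

noncomputable def U (u : (ℤ√2)ˣ) (x : ℤ√2) : MMˣ where
  val := !![rho u, rho x; 0, 1]
  inv := !![rho ↑u⁻¹, -(rho ↑u⁻¹ * rho x); 0, 1]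
  val_inv := by
    rw [Matrix.mul_fin_two, Matrix.one_fin_two]
    refine fin2_eq ?_ ?_ ?_ ?_
    · linear_combination runit u
    · linear_combination (-(rho x)) * runit u
    · ring
    · ring
  inv_val := by
    rw [Matrix.mul_fin_two, Matrix.one_fin_two]
    refine fin2_eq ?_ ?_ ?_ ?_
    · linear_combination runit u
    · ring
    · ring
    · ring

theorem U_mul (u v : (ℤ√2)ˣ) (x y : ℤ√2) :
    U u x * U v y = U (u*v) (↑u * y + x) := by
  apply Units.ext
  rw [Units.val_mul]
  show !![rho u, rho x; 0, 1] * !![rho v, rho y; 0, 1]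
      = !![rho ↑(u*v), rho (↑u * y + x); 0, 1]
  rw [Matrix.mul_fin_two]
  refine fin2_eq ?_ ?_ ?_ ?_
  · push_cast [map_mul]; ring
  · push_cast [map_add, map_mul]; ring
  · ring
  · ring

theorem U_one : U 1 0 = 1 := by
  apply Units.ext
  show !![rho 1, rho 0; 0, 1] = 1
  rw [Matrix.one_fin_two, map_one, map_zero]

theorem U_inv (u : (ℤ√2)ˣ) (x : ℤ√2) :
    (U u x)⁻¹ = U u⁻¹ (-(↑u⁻¹ * x)) := by
  apply inv_eq_of_mul_eq_one_right
  rw [U_mul]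
  have h1 : u * u⁻¹ = 1 := by group
  have h2 : (↑u : ℤ√2) * -(↑u⁻¹ * x) + x = 0 := by
    have : (↑u : ℤ√2) * ↑u⁻¹ = 1 := by rw [← Units.val_mul, h1]; rfl
    linear_combination (-x) * this
  rw [h1, h2, U_one]

theorem U_inj {u v : (ℤ√2)ˣ} {x y : ℤ√2} (h : U u x = U v y) : u = v ∧ x = y := by
  have hv : (U u x).val = (U v y).val := by rw [h]
  have h01 : rho x = rho y := congrFun (congrFun hv 0) 1
  have h00 : rho ↑u = rho ↑v := congrFun (congrFun hv 0) 0
  exact ⟨Units.ext (rho_inj h00), rho_inj h01⟩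

theorem U_congr {u v : (ℤ√2)ˣ} {x y : ℤ√2} (h1 : u = v) (h2 : x = y) : U u x = U v y := by
  rw [h1, h2]

theorem U1_mul (x y : ℤ√2) : U 1 x * U 1 y = U 1 (x + y) := by
  rw [U_mul]
  exact U_congr (mul_one 1) (by rw [Units.val_one, one_mul, add_comm])

theorem U1_inv (x : ℤ√2) : (U 1 x)⁻¹ = U 1 (-x) := by
  rw [U_inv]
  exact U_congr inv_one (by rw [inv_one, Units.val_one, one_mul])

theorem comm_U (u v : (ℤ√2)ˣ) (x y : ℤ√2) :
    ⁅U u x, U v y⁆ = U 1 ((↑u - 1) * y + (1 - ↑v) * x) := by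
  rw [commutatorElement_def, U_inv, U_inv, U_mul, U_mul, U_mul]
  have h1 : (↑u : ℤ√2) * ↑u⁻¹ = 1 := by rw [← Units.val_mul, mul_inv_cancel]; rfl
  have h2 : (↑v : ℤ√2) * ↑v⁻¹ = 1 := by rw [← Units.val_mul, mul_inv_cancel]; rfl
  refine U_congr (by rw [mul_comm u v]; group) ?_
  simp only [Units.val_mul]
  linear_combination (-(↑v * ↑v⁻¹ * y) - ↑v * x) * h1 + (-y) * h2

noncomputable def Gs : Subgroup MMˣ where
  carrier := {w | ∃ u x, w = U u x}
  one_mem' := ⟨1, 0, U_one.symm⟩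
  mul_mem' := by
    rintro a b ⟨u, x, rfl⟩ ⟨v, y, rfl⟩
    exact ⟨u * v, _, U_mul u v x y⟩
  inv_mem' := by
    rintro a ⟨u, x, rfl⟩
    exact ⟨u⁻¹, _, U_inv u x⟩

noncomputable def Ks : Subgroup MMˣ where
  carrier := {w | ∃ x, pii x = 0 ∧ w = U 1 x}
  one_mem' := ⟨0, by simp, U_one.symm⟩
  mul_mem' := by
    rintro a b ⟨x, hx, rfl⟩ ⟨y, hy, rfl⟩
    exact ⟨x + y, by rw [map_add, hx, hy, add_zero], U1_mul x y⟩
  inv_mem' := by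
    rintro a ⟨x, hx, rfl⟩
    exact ⟨-x, by rw [map_neg, hx, neg_zero], U1_inv x⟩

theorem U1_pow (x : ℤ√2) (n : ℕ) : (U 1 x)^n = U 1 ((n : ℤ√2) * x) := by
  induction n with
  | zero => rw [pow_zero, ← U_one]; exact U_congr rfl (by push_cast; ring)
  | succ k ih =>
      rw [pow_succ, ih, U1_mul]
      exact U_congr rfl (by push_cast; ring)

theorem U1_zpow (x : ℤ√2) (n : ℤ) : (U 1 x)^n = U 1 ((n : ℤ√2) * x) := by
  cases n with
  | ofNat k => rw [Int.ofNat_eq_coe, zpow_natCast, U1_pow]; exact U_congr rfl (by push_cast; ring)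
  | negSucc k =>
      rw [zpow_negSucc, U1_pow, U1_inv]
      exact U_congr rfl (by push_cast; ring)

noncomputable def psi : Multiplicative (ℤ × ℤ) →* MMˣ where
  toFun p := U 1 ⟨2 * (Multiplicative.toAdd p).2, (Multiplicative.toAdd p).1⟩
  map_one' := by
    refine (U_congr rfl ?_).trans U_one
    ext <;> simp
  map_mul' p q := by
    rw [U1_mul]
    refine U_congr rfl ?_
    ext <;> simp <;> ring

def mu : (ℤ√2)ˣ where
  val := ⟨1,1⟩
  inv := ⟨-1,1⟩
  val_inv := by ext <;> simp
  inv_val := by ext <;> simp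

theorem stmt9 (g h : (Matrix (Fin 2) (Fin 2) ℝ)ˣ)
    (hg : (g : Matrix (Fin 2) (Fin 2) ℝ) = !![1 + Real.sqrt 2, 0; 0, 1])
    (hh : (h : Matrix (Fin 2) (Fin 2) ℝ) = !![1, 1; 0, 1]) :
    (∀ a b : ↥⁅Subgroup.closure {g, h}, Subgroup.closure {g, h}⁆, a * b = b * a) ∧
    Nonempty (↥⁅Subgroup.closure {g, h}, Subgroup.closure {g, h}⁆
      ≃* Multiplicative (ℤ × ℤ)) := by
  have hgU : g = U mu 0 := by
    apply Units.ext
    rw [hg]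
    show _ = !![rho ↑mu, rho 0; 0, 1]
    refine fin2_eq ?_ ?_ rfl rfl
    · show (1 + Real.sqrt 2) = rho ⟨1,1⟩
      simp [rho, Zsqrtd.toReal_apply]
    · rw [map_zero]
  have hhU : h = U 1 1 := by
    apply Units.ext
    rw [hh]
    show _ = !![rho ↑(1:(ℤ√2)ˣ), rho 1; 0, 1]
    exact fin2_eq (by rw [Units.val_one, map_one]) (by rw [map_one]) rfl rfl
  set H := Subgroup.closure {g, h} with hHdef
  have hgH : g ∈ H := Subgroup.subset_closure (by simp)
  have hhH : h ∈ H := Subgroup.subset_closure (by simp)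
  have hH : H ≤ Gs := by
    rw [hHdef, Subgroup.closure_le]
    intro w hw
    rcases hw with rfl | hw
    · exact ⟨mu, 0, hgU⟩
    · rcases hw with rfl
      exact ⟨1, 1, hhU⟩
  have hC : ⁅H, H⁆ ≤ Ks := by
    rw [Subgroup.commutator_le]
    intro a ha b hb
    obtain ⟨u, x, rfl⟩ := hH ha
    obtain ⟨v, y, rfl⟩ := hH hb
    rw [comm_U]
    refine ⟨_, ?_, rfl⟩
    rw [map_add, map_mul, map_mul, map_sub, map_sub, map_one, pii_unit, pii_unit]
    ring
  constructor
  · intro a b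
    obtain ⟨x, hx, hax⟩ := hC a.2
    obtain ⟨y, hy, hby⟩ := hC b.2
    apply Subtype.ext
    show (↑a : MMˣ) * ↑b = ↑b * ↑a
    rw [hax, hby, U1_mul, U1_mul, add_comm]
  · have hgh : ⁅g, h⁆ = U 1 ⟨0,1⟩ := by
      rw [hgU, hhU, comm_U]
      refine U_congr rfl ?_
      show ((⟨1,1⟩ : ℤ√2) - 1) * 1 + (1 - ↑(1:(ℤ√2)ˣ)) * 0 = ⟨0,1⟩
      rw [Units.val_one]
      ext <;> simp
    have hgh2 : ⁅g, ⁅g, h⁆⁆ = U 1 ⟨2,0⟩ := by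
      rw [hgh, hgU, comm_U]
      refine U_congr rfl ?_
      show ((⟨1,1⟩ : ℤ√2) - 1) * ⟨0,1⟩ + (1 - ↑(1:(ℤ√2)ˣ)) * 0 = ⟨2,0⟩
      rw [Units.val_one]
      ext <;> simp
    have hghH : ⁅g, h⁆ ∈ H := by
      rw [commutatorElement_def]
      exact H.mul_mem (H.mul_mem (H.mul_mem hgH hhH) (H.inv_mem hgH)) (H.inv_mem hhH)
    have c1 : U 1 ⟨0,1⟩ ∈ ⁅H, H⁆ := hgh ▸ Subgroup.commutator_mem_commutator hgH hhH
    have c2 : U 1 ⟨2,0⟩ ∈ ⁅H, H⁆ := hgh2 ▸ Subgroup.commutator_mem_commutator hgH hghH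
    have memC : ∀ p, psi p ∈ ⁅H, H⁆ := by
      intro p
      have hps : psi p = (U 1 ⟨0,1⟩) ^ ((Multiplicative.toAdd p).1)
          * (U 1 ⟨2,0⟩) ^ ((Multiplicative.toAdd p).2) := by
        rw [U1_zpow, U1_zpow, U1_mul]
        refine U_congr rfl ?_
        ext <;> simp <;> ring
      rw [hps]
      exact Subgroup.mul_mem _ (Subgroup.zpow_mem _ c1 _) (Subgroup.zpow_mem _ c2 _)
    let psiC : Multiplicative (ℤ × ℤ) →* ↥⁅H, H⁆ := psi.codRestrict _ memC
    have hinj : Function.Injective psiC := by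
      rw [injective_iff_map_eq_one]
      intro p hp
      have hone : psi p = 1 := congrArg (Subgroup.subtype _) hp
      rw [← U_one] at hone
      obtain ⟨-, h2⟩ := U_inj hone
      have hre : 2 * (Multiplicative.toAdd p).2 = 0 := by
        have := congrArg Zsqrtd.re h2; simpa using this
      have him : (Multiplicative.toAdd p).1 = 0 := by
        have := congrArg Zsqrtd.im h2; simpa using this
      have : Multiplicative.toAdd p = 0 := by
        have h3 : (Multiplicative.toAdd p).2 = 0 := by omega
        exact Prod.ext him h3
      simpa using congrArg Multiplicative.ofAdd this
    have hsurj : Function.Surjective psiC := by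
      rintro ⟨w, hw⟩
      obtain ⟨x, hx, rfl⟩ := hC hw
      have hdvd : (2:ℤ) ∣ x.re := by
        rwa [show pii x = ((x.re : ℤ) : ZMod 2) from rfl,
          ZMod.intCast_zmod_eq_zero_iff_dvd] at hx
      obtain ⟨b, hb⟩ := hdvd
      refine ⟨Multiplicative.ofAdd (x.im, b), ?_⟩
      apply Subtype.ext
      show psi _ = U 1 x
      refine U_congr rfl ?_
      ext <;> simp [← hb]
    exact ⟨(MulEquiv.ofBijective psiC ⟨hinj, hsurj⟩).symm⟩
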